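/- arXiv:1603.01859 — 2 statements merged into one kernel-verified Lean document; each statement's English description precedes it below -/
import Mathlib

section
/- Let t > 1 be odd and let G = ℤ_t × ℤ_2 × ℤ_2, with elements indexed by ι : {1,…,4t} → G, ι(k) = (⌊(k−1)/4⌋ mod t, ⌊((k−1) mod 4)/2⌋ mod 2, (k−1) mod 2). Let ρ : G × G → {1,−1} be given by ρ((a,b,c),(a',b',c')) = (−1)^{b·b' + b·c' + c·c'} (so that the matrix of ρ equals 1_t ⊗ [[1,1,1,1],[1,−1,1,−1],[1,−1,−1,1],[1,1,−1,−1]]), and let S = {ι(k) : 2 ≤ k ≤ 4t−2} = G ∖ {(0,0,0), (t−1,1,0), (t−1,1,1)}. In ℚ[x_d : d ∈ S], let J be the ideal generated by x_d² − x_d for all d ∈ S together with, for each s ∈ {5, 6, …, 2t+2}, the polynomial Σ_{h∈G} ρ(ι(s),h) · ∏_{d ∈ S ∩ {h, ι(s)·h}} (1 − 2x_d). Then a point a : S → ℚ lies in the affine variety V(J) if and only if a_d ∈ {0,1} for every d ∈ S and the cocyclic matrix of ψ(g,h) = ρ(g,h)·∏_{d∈S} ∂_d(g,h)^{a_d} is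 Hadamard. -/
open Matrix MvPolynomial

/-- The group `ℤ_t × ℤ_2 × ℤ_2` (written additively). -/
abbrev GZ (t : ℕ) := ZMod t × ZMod 2 × ZMod 2

/-- The characteristic map `δ_d`. -/
def charMap {A : Type*} [DecidableEq A] (d x : A) : ℤ := if x = d then -1 else 1

/-- The elementary coboundary `∂_d` (additive notation). -/
def elemCob {A : Type*} [AddGroup A] [DecidableEq A] (d g h : A) : ℤ :=
  charMap d g * charMap d h * charMap d (g + h)

/-- The indexing `ι : {1,…,4t} → ℤ_t × ℤ_2 × ℤ_2` of the paper. -/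
def iota (t : ℕ) (k : ℕ) : GZ t :=
  ((((k - 1) / 4 : ℕ) : ZMod t), ((((k - 1) % 4) / 2 : ℕ) : ZMod 2), (((k - 1) % 2 : ℕ) : ZMod 2))

/-- The fixed representative cocycle `ρ((a,b,c),(a',b',c')) = (−1)^{b·b' + b·c' + c·c'}`,
whose matrix is `1_t ⊗ [[1,1,1,1],[1,−1,1,−1],[1,−1,−1,1],[1,1,−1,−1]]`. -/
def rhoZ (t : ℕ) (p q : GZ t) : ℤ :=
  (-1) ^ (p.2.1.val * q.2.1.val + p.2.1.val * q.2.2.val + p.2.2.val * q.2.2.val)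

/-- The coboundary index set `S = G ∖ {(0,0,0), (t−1,1,0), (t−1,1,1)}`. -/
def SZ (t : ℕ) [NeZero t] : Finset (GZ t) :=
  Finset.univ \ {((0 : ZMod t), (0 : ZMod 2), (0 : ZMod 2)),
    (((t - 1 : ℕ) : ZMod t), (1 : ZMod 2), (0 : ZMod 2)),
    (((t - 1 : ℕ) : ZMod t), (1 : ZMod 2), (1 : ZMod 2))}

/-- The row polynomial `Σ_{h∈G} ρ(ι(s),h) · ∏_{d ∈ S ∩ {h, ι(s)+h}} (1 - 2x_d)`. -/
noncomputable def rowPolyZ (t : ℕ) [NeZero t] (s : ℕ) :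
    MvPolynomial {d : GZ t // d ∈ SZ t} ℚ :=
  ∑ h : GZ t, MvPolynomial.C ((rhoZ t (iota t s) h : ℤ) : ℚ) *
    ∏ d : {d : GZ t // d ∈ SZ t},
      if (d : GZ t) = h ∨ (d : GZ t) = iota t s + h then (1 - 2 * MvPolynomial.X d) else 1

/-- The ideal `J_{ℤ_t×ℤ_2²}` of Theorem 4. -/
noncomputable def idealZ (t : ℕ) [NeZero t] : Ideal (MvPolynomial {d : GZ t // d ∈ SZ t} ℚ) :=
  Ideal.span
    ({p | ∃ d : {d : GZ t // d ∈ SZ t}, p = MvPolynomial.X d ^ 2 - MvPolynomial.X d} ∪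
     {p | ∃ s : ℕ, 5 ≤ s ∧ s ≤ 2 * t + 2 ∧ p = rowPolyZ t s})

set_option linter.unusedSectionVars false

namespace Aux16

lemma charMap_sq {A : Type*} [DecidableEq A] (d x : A) : charMap d x * charMap d x = 1 := by
  unfold charMap; split <;> norm_num

lemma charMap_pm {A : Type*} [DecidableEq A] (d x : A) : charMap d x = 1 ∨ charMap d x = -1 := by
  unfold charMap; split <;> simp

lemma elemCob_sq {A : Type*} [AddGroup A] [DecidableEq A] (d g h : A) :
    elemCob d g h * elemCob d g h = 1 := by
  unfold elemCob
  have h1 := charMap_sq d g; have h2 := charMap_sq d h; have h3 := charMap_sq d (g + h)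
  linear_combination (charMap d g * charMap d g * charMap d h * charMap d h) * h3 +
    (charMap d g * charMap d g) * h2 + h1

lemma elemCob_cocycle {A : Type*} [AddCommGroup A] [DecidableEq A] (d g h k : A) :
    elemCob d g h * elemCob d (g + h) k = elemCob d h k * elemCob d g (h + k) := by
  unfold elemCob
  rw [show g + (h + k) = g + h + k from (add_assoc g h k).symm]
  have h1 := charMap_sq d (g + h); have h2 := charMap_sq d (h + k)
  linear_combination (charMap d g * charMap d h * charMap d k * charMap d (g + h + k)) * h1
    - (charMap d g * charMap d h * charMap d k * charMap d (g + h + k)) * h2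

def rAux (x y : ZMod 2 × ZMod 2) : ℤ :=
  (-1) ^ (x.1.val * y.1.val + x.1.val * y.2.val + x.2.val * y.2.val)

variable {t : ℕ} [NeZero t]

lemma rhoZ_eq (p q : GZ t) : rhoZ t p q = rAux p.2 q.2 := rfl

lemma rAux_cocycle : ∀ x y z : ZMod 2 × ZMod 2,
    rAux x y * rAux (x + y) z = rAux y z * rAux x (y + z) := by decide

lemma rAux_sq : ∀ x y : ZMod 2 × ZMod 2, rAux x y * rAux x y = 1 := by decide

lemma rAux_zero_left : ∀ y : ZMod 2 × ZMod 2, rAux 0 y = 1 := by decide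

lemma rAux_zero_right : ∀ x : ZMod 2 × ZMod 2, rAux x 0 = 1 := by decide

lemma rAux_shift : ∀ x y : ZMod 2 × ZMod 2, x ≠ 0 → rAux x (x + y) = - rAux x y := by decide

lemma coe_ne_zero (d : {d : GZ t // d ∈ SZ t}) : (d : GZ t) ≠ 0 := by
  intro h
  have hd := (Finset.mem_sdiff.mp d.2).2
  apply hd
  rw [h]
  exact Finset.mem_insert_self _ _

/-- the coboundary product part of ψ -/
def P (a : {d : GZ t // d ∈ SZ t} → ℚ) (g h : GZ t) : ℤ :=
  ∏ d : {d : GZ t // d ∈ SZ t}, (if a d = 1 then elemCob (d : GZ t) g h else 1)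

/-- ψ itself -/
def psi (a : {d : GZ t // d ∈ SZ t} → ℚ) (g h : GZ t) : ℤ := rhoZ t g h * P a g h

variable (a : {d : GZ t // d ∈ SZ t} → ℚ)

lemma P_sq (g h : GZ t) : P a g h * P a g h = 1 := by
  rw [P, ← Finset.prod_mul_distrib]
  apply Finset.prod_eq_one; intro d _
  split
  · exact elemCob_sq _ _ _
  · simp

lemma P_cocycle (g h k : GZ t) : P a g h * P a (g + h) k = P a h k * P a g (h + k) := by
  rw [P, P, P, P, ← Finset.prod_mul_distrib, ← Finset.prod_mul_distrib]
  apply Finset.prod_congr rfl; intro d _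
  split
  · exact elemCob_cocycle _ _ _ _
  · simp

lemma P_zero_left (h : GZ t) : P a 0 h = 1 := by
  rw [P]; apply Finset.prod_eq_one; intro d _
  split
  · rw [elemCob, zero_add]
    rw [show charMap (d : GZ t) 0 = 1 from if_neg (fun hh => coe_ne_zero d hh.symm)]
    rw [one_mul]; exact charMap_sq _ _
  · rfl

lemma P_zero_right (g : GZ t) : P a g 0 = 1 := by
  rw [P]; apply Finset.prod_eq_one; intro d _
  split
  · rw [elemCob, add_zero]
    rw [show charMap (d : GZ t) 0 = 1 from if_neg (fun hh => coe_ne_zero d hh.symm)]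
    rw [mul_comm (charMap (d : GZ t) g) 1, one_mul, mul_comm]
    exact charMap_sq _ _
  · rfl

lemma P_shift (e h : GZ t) (he : e + e = 0) : P a e (e + h) = P a e h := by
  rw [P, P]; apply Finset.prod_congr rfl; intro d _
  split
  · rw [elemCob, elemCob, show e + (e + h) = h by rw [← add_assoc, he, zero_add]]; ring
  · rfl

lemma psi_sq (g h : GZ t) : psi a g h * psi a g h = 1 := by
  rw [psi, mul_mul_mul_comm, P_sq, rhoZ_eq, rAux_sq, one_mul]

lemma psi_cocycle (g h k : GZ t) :
    psi a g h * psi a (g + h) k = psi a h k * psi a g (h + k) := by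
  rw [psi, psi, psi, psi, mul_mul_mul_comm, mul_mul_mul_comm _ (P a h k), P_cocycle]
  congr 1
  exact rAux_cocycle g.2 h.2 k.2

lemma psi_zero_left (h : GZ t) : psi a 0 h = 1 := by
  rw [psi, P_zero_left, mul_one, rhoZ_eq]
  exact rAux_zero_left h.2

lemma psi_zero_right (g : GZ t) : psi a g 0 = 1 := by
  rw [psi, P_zero_right, mul_one, rhoZ_eq]
  exact rAux_zero_right g.2

/-- the row sum -/
def Rs (a : {d : GZ t // d ∈ SZ t} → ℚ) (e : GZ t) : ℤ := ∑ h : GZ t, psi a e h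

lemma Rs_zero : Rs a 0 = (4 * t : ℤ) := by
  rw [Rs]
  rw [Finset.sum_congr rfl (fun h _ => psi_zero_left a h)]
  rw [Finset.sum_const, Finset.card_univ]
  have : Fintype.card (GZ t) = t * (2 * 2) := by
    simp [Fintype.card_prod, ZMod.card]
  rw [this]; push_cast; ring

lemma entry_eq (g g' : GZ t) :
    ∑ h : GZ t, psi a g h * psi a g' h = psi a (g - g') g' * Rs a (g - g') := by
  have key : ∀ h : GZ t, psi a g h * psi a g' h
      = psi a (g - g') g' * psi a (g - g') (g' + h) := by
    intro h
    have hc := psi_cocycle a (g - g') g' h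
    rw [sub_add_cancel] at hc
    have h1 := psi_sq a (g - g') g'
    have h2 := psi_sq a g' h
    linear_combination (psi a g' h * psi a (g - g') g') * hc
      - (psi a g h * psi a g' h) * h1 + (psi a (g - g') g' * psi a (g - g') (g' + h)) * h2
  rw [Finset.sum_congr rfl (fun h _ => key h), ← Finset.mul_sum, Rs]
  congr 1
  exact Equiv.sum_comp (Equiv.addLeft g') (fun h => psi a (g - g') h)

lemma Rs_neg (e : GZ t) : Rs a e = psi a (-e) e * Rs a (-e) := by
  have key : ∀ h : GZ t, psi a e h = psi a (-e) e * psi a (-e) (e + h) := by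
    intro h
    have hc := psi_cocycle a (-e) e h
    rw [neg_add_cancel, psi_zero_left] at hc
    have h2 := psi_sq a (-e) (e + h)
    linear_combination (-(psi a (-e) (e + h))) * hc - (psi a e h) * h2
  rw [Rs, Finset.sum_congr rfl (fun h _ => key h), ← Finset.mul_sum, Rs]
  congr 1
  exact Equiv.sum_comp (Equiv.addLeft e) (fun h => psi a (-e) h)

lemma Rs_row_zero (e : GZ t) (h1 : e.1 = 0) (h2 : e ≠ 0) : Rs a e = 0 := by
  have he2 : e.2 ≠ 0 := by
    intro h0
    exact h2 (Prod.ext h1 h0)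
  have hee : e + e = 0 := by
    apply Prod.ext
    · show e.1 + e.1 = 0; rw [h1, add_zero]
    · show e.2 + e.2 = 0
      revert he2
      generalize e.2 = x
      revert x; decide
  have hpsi : ∀ h : GZ t, psi a e (e + h) = - psi a e h := by
    intro h
    rw [psi, psi, P_shift a e h hee, rhoZ_eq, rhoZ_eq]
    rw [show ((e + h).2 : ZMod 2 × ZMod 2) = e.2 + h.2 from rfl]
    rw [rAux_shift e.2 h.2 he2]
    ring
  have h3 : Rs a e = - Rs a e := by
    calc Rs a e = ∑ h : GZ t, psi a e (e + h) :=
          (Equiv.sum_comp (Equiv.addLeft e) (fun h => psi a e h)).symm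
      _ = ∑ h : GZ t, - psi a e h := Finset.sum_congr rfl (fun h _ => hpsi h)
      _ = - Rs a e := by rw [Rs, Finset.sum_neg_distrib]
  omega
lemma iota_hits (e : GZ t) (h1 : e.1 ≠ 0) (h2 : 2 * e.1.val < t) :
    ∃ s, 5 ≤ s ∧ s ≤ 2 * t + 2 ∧ iota t s = e := by
  set A := e.1.val with hA
  set B := e.2.1.val with hB
  set C := e.2.2.val with hC
  have hA1 : 1 ≤ A := ZMod.val_pos.mpr h1
  have hB2 : B < 2 := ZMod.val_lt e.2.1
  have hC2 : C < 2 := ZMod.val_lt e.2.2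
  refine ⟨4 * A + 2 * B + C + 1, by omega, by omega, ?_⟩
  rw [iota]
  have e1 : (4 * A + 2 * B + C + 1 - 1) / 4 = A := by omega
  have e2 : (4 * A + 2 * B + C + 1 - 1) % 4 / 2 = B := by omega
  have e3 : (4 * A + 2 * B + C + 1 - 1) % 2 = C := by omega
  rw [e1, e2, e3, hA, hB, hC, ZMod.natCast_zmod_val, ZMod.natCast_zmod_val,
    ZMod.natCast_zmod_val]

lemma neg_snd_eq (e : GZ t) : (-e).2 = e.2 := by
  have : ∀ x : ZMod 2 × ZMod 2, -x = x := by decide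
  show -(e.2) = e.2
  exact this e.2

lemma coverage (htodd : Odd t) (e : GZ t) (he1 : e.1 ≠ 0) :
    ∃ s, 5 ≤ s ∧ s ≤ 2 * t + 2 ∧ (iota t s = e ∨ iota t s = -e) := by
  have hAlt : e.1.val < t := ZMod.val_lt e.1
  have hA1 : 1 ≤ e.1.val := ZMod.val_pos.mpr he1
  have hne : 2 * e.1.val ≠ t := by
    intro hh
    have : Even t := ⟨e.1.val, by omega⟩
    exact (Nat.not_odd_iff_even.mpr this) htodd
  rcases lt_or_gt_of_ne hne with hlt | hgt
  · obtain ⟨s, hs1, hs2, hs3⟩ := iota_hits e he1 hlt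
    exact ⟨s, hs1, hs2, Or.inl hs3⟩
  · have hne1 : (-e).1 ≠ 0 := by
      show -(e.1) ≠ 0
      simpa using he1
    have hval : (-e).1.val = t - e.1.val := by
      show (-(e.1)).val = t - e.1.val
      rw [ZMod.neg_val, if_neg he1]
    obtain ⟨s, hs1, hs2, hs3⟩ := iota_hits (-e) hne1 (by rw [hval]; omega)
    exact ⟨s, hs1, hs2, Or.inr hs3⟩

lemma iota_ne_zero (s : ℕ) (hs1 : 5 ≤ s) (hs2 : s ≤ 2 * t + 2) (ht : 1 < t) :
    iota t s ≠ 0 := by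
  intro h
  have h1 : (((s - 1) / 4 : ℕ) : ZMod t) = 0 := congrArg Prod.fst h
  have hlt : (s - 1) / 4 < t := by omega
  have hge : 1 ≤ (s - 1) / 4 := by omega
  have := ZMod.val_cast_of_lt hlt
  rw [h1, ZMod.val_zero] at this
  omega
lemma charMap_pair (e d h : GZ t) (he : e ≠ 0) :
    charMap d h * charMap d (e + h) = if d = h ∨ d = e + h then -1 else 1 := by
  unfold charMap
  by_cases hd1 : h = d <;> by_cases hd2 : e + h = d
  · exfalso; apply he
    have h3 : e + h = 0 + h := by rw [zero_add, hd2, hd1]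
    exact add_right_cancel h3
  · rw [if_pos hd1, if_neg hd2, if_pos (Or.inl hd1.symm)]; ring
  · rw [if_neg hd1, if_pos hd2, if_pos (Or.inr hd2.symm)]; ring
  · rw [if_neg hd1, if_neg hd2, if_neg]; · ring
    rintro (h | h) <;> simp_all

lemma eval_rowPoly_eq (s : ℕ) (ha : ∀ d, a d = 0 ∨ a d = 1) (hs : iota t s ≠ 0) :
    ((Rs a (iota t s) : ℤ) : ℚ)
      = (∏ d : {d : GZ t // d ∈ SZ t}, (if a d = 1 then (charMap (d : GZ t) (iota t s) : ℚ) else 1))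
        * eval a (rowPolyZ t s) := by
  set e := iota t s with hedef
  have heval : eval a (rowPolyZ t s)
      = ∑ h : GZ t, ((rhoZ t e h : ℤ) : ℚ) *
          ∏ d : {d : GZ t // d ∈ SZ t},
            (if (d : GZ t) = h ∨ (d : GZ t) = e + h then 1 - 2 * a d else 1) := by
    rw [rowPolyZ, map_sum]
    apply Finset.sum_congr rfl; intro h _
    rw [_root_.map_mul, eval_C, map_prod]
    congr 1
    apply Finset.prod_congr rfl; intro d _
    rw [apply_ite (eval a)]
    simp
    rfl
  rw [heval, Finset.mul_sum]
  rw [Rs, Int.cast_sum]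
  apply Finset.sum_congr rfl; intro h _
  rw [psi, Int.cast_mul]
  have hP : ((P a e h : ℤ) : ℚ)
      = (∏ d : {d : GZ t // d ∈ SZ t}, (if a d = 1 then (charMap (d : GZ t) e : ℚ) else 1))
        * ∏ d : {d : GZ t // d ∈ SZ t},
            (if (d : GZ t) = h ∨ (d : GZ t) = e + h then 1 - 2 * a d else 1) := by
    rw [P, Int.cast_prod, ← Finset.prod_mul_distrib]
    apply Finset.prod_congr rfl; intro d _
    rcases ha d with h0 | h1
    · rw [if_neg (by rw [h0]; norm_num), if_neg (by rw [h0]; norm_num)]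
      rw [h0]
      split <;> norm_num
    · rw [if_pos h1, if_pos h1, h1, elemCob, Int.cast_mul, Int.cast_mul]
      rw [show ((1 : ℚ) - 2 * 1) = -1 by norm_num]
      have hcp := charMap_pair e (d : GZ t) h hs
      rw [mul_assoc]
      congr 1
      rw [← Int.cast_mul, hcp, apply_ite (fun z : ℤ => (z : ℚ))]
      norm_num
  rw [hP]
  ring

lemma prod_char_ne_zero (e : GZ t) :
    (∏ d : {d : GZ t // d ∈ SZ t}, (if a d = 1 then (charMap (d : GZ t) e : ℚ) else 1)) ≠ 0 := by
  apply Finset.prod_ne_zero_iff.mpr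
  intro d _
  split
  · rcases charMap_pm (d : GZ t) e with h | h <;> rw [h] <;> norm_num
  · norm_num

lemma eval_rowPoly_zero_iff (s : ℕ) (ha : ∀ d, a d = 0 ∨ a d = 1) (hs : iota t s ≠ 0) :
    eval a (rowPolyZ t s) = 0 ↔ Rs a (iota t s) = 0 := by
  rw [← Int.cast_eq_zero (α := ℚ), eval_rowPoly_eq a s ha hs, mul_eq_zero]
  have := prod_char_ne_zero a (iota t s)
  tauto
lemma hadamard_iff :
    (Matrix.of (psi a) * (Matrix.of (psi a))ᵀ = (4 * t : ℤ) • (1 : Matrix (GZ t) (GZ t) ℤ))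
      ↔ ∀ e : GZ t, e ≠ 0 → Rs a e = 0 := by
  constructor
  · intro hm e he
    have h0 := congrFun (congrFun hm e) 0
    rw [Matrix.mul_apply] at h0
    simp only [Matrix.transpose_apply, Matrix.of_apply] at h0
    rw [Finset.sum_congr rfl (fun h _ => by rw [show psi a e h * psi a 0 h = psi a e h by
      rw [psi_zero_left, mul_one]])] at h0
    rw [Matrix.smul_apply, Matrix.one_apply_ne he, smul_zero] at h0
    rw [Rs]
    exact h0
  · intro hr
    ext g g'
    rw [Matrix.mul_apply]
    simp only [Matrix.transpose_apply, Matrix.of_apply]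
    rw [entry_eq a g g', Matrix.smul_apply]
    by_cases hgg : g = g'
    · subst hgg
      rw [sub_self, psi_zero_left, Rs_zero, one_mul, Matrix.one_apply_eq]
      simp
    · rw [hr _ (sub_ne_zero_of_ne hgg), mul_zero, Matrix.one_apply_ne hgg, smul_zero]

end Aux16

open Aux16 in
/-- a point lies in `V(J)` iff it is a `{0,1}`-tuple whose associated
cocyclic matrix over `ℤ_t × ℤ_2 × ℤ_2` is Hadamard. -/
theorem mem_variety_idealZ_iff (t : ℕ) [NeZero t] (ht : 1 < t) (htodd : Odd t)
    (a : {d : GZ t // d ∈ SZ t} → ℚ) :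
    (∀ p ∈ idealZ t, eval a p = 0) ↔
      (∀ d, a d = 0 ∨ a d = 1) ∧
      (Matrix.of fun g h : GZ t =>
            rhoZ t g h *
              ∏ d : {d : GZ t // d ∈ SZ t}, (if a d = 1 then elemCob (d : GZ t) g h else 1)) *
          (Matrix.of fun g h : GZ t =>
            rhoZ t g h *
              ∏ d : {d : GZ t // d ∈ SZ t}, (if a d = 1 then elemCob (d : GZ t) g h else 1))ᵀ =
        (4 * t : ℤ) • (1 : Matrix (GZ t) (GZ t) ℤ) := by
  have hmat : (Matrix.of fun g h : GZ t =>
      rhoZ t g h *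
        ∏ d : {d : GZ t // d ∈ SZ t}, (if a d = 1 then elemCob (d : GZ t) g h else 1))
      = Matrix.of (psi a) := rfl
  rw [hmat]
  constructor
  · intro hJ
    have ha : ∀ d, a d = 0 ∨ a d = 1 := by
      intro d
      have hmem : (MvPolynomial.X d ^ 2 - MvPolynomial.X d :
          MvPolynomial {d : GZ t // d ∈ SZ t} ℚ) ∈ idealZ t :=
        Ideal.subset_span (Or.inl ⟨d, rfl⟩)
      have he := hJ _ hmem
      rw [map_sub, map_pow, eval_X] at he
      have : a d * (a d - 1) = 0 := by linear_combination he
      rcases mul_eq_zero.mp this with h | h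
      · exact Or.inl h
      · exact Or.inr (by linarith)
    refine ⟨ha, (hadamard_iff a).mpr ?_⟩
    intro e he
    by_cases he1 : e.1 = 0
    · exact Rs_row_zero a e he1 he
    · obtain ⟨s, hs1, hs2, hs3⟩ := coverage htodd e he1
      have hmem : rowPolyZ t s ∈ idealZ t :=
        Ideal.subset_span (Or.inr ⟨s, hs1, hs2, rfl⟩)
      have hiz : iota t s ≠ 0 := by
        rcases hs3 with h | h <;> rw [h]
        · exact he
        · exact neg_ne_zero.mpr he
      have hz := (eval_rowPoly_zero_iff a s ha hiz).mp (hJ _ hmem)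
      rcases hs3 with h | h
      · rwa [h] at hz
      · rw [h] at hz
        rw [Rs_neg a e, hz, mul_zero]
  · rintro ⟨ha, hm⟩
    have hRs := (hadamard_iff a).mp hm
    intro p hp
    have hle : idealZ t ≤ RingHom.ker (eval (R := ℚ) a) := by
      rw [idealZ]
      apply Ideal.span_le.mpr
      rintro p (⟨d, rfl⟩ | ⟨s, hs1, hs2, rfl⟩)
      · rw [SetLike.mem_coe, RingHom.mem_ker, map_sub, map_pow, eval_X]
        rcases ha d with h | h <;> rw [h] <;> norm_num
      · rw [SetLike.mem_coe, RingHom.mem_ker]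
        have hiz := iota_ne_zero s hs1 hs2 ht
        exact (eval_rowPoly_zero_iff a s ha hiz).mpr (hRs _ hiz)
    exact hle hp
end

section
/- Let t > 1 be odd, G = ℤ_t × ℤ_2 × ℤ_2 indexed by ι(k) = (⌊(k−1)/4⌋ mod t, ⌊((k−1) mod 4)/2⌋ mod 2, (k−1) mod 2), ρ((a,b,c),(a',b',c')) = (−1)^{b·b' + b·c' + c·c'}, and S = G ∖ {(0,0,0), (t−1,1,0), (t−1,1,1)}. Let J ⊆ ℚ[x_d : d ∈ S] be the ideal generated by x_d² − x_d for d ∈ S together with, for each s ∈ {5,…,2t+2}, the polynomial Σ_{h∈G} ρ(ι(s),h) · ∏_{d ∈ S ∩ {h, ι(s)·h}} (1 − 2x_d). Then the number of tuples (x_d)_{d∈S} ∈ {0,1}^S for which the cocyclic matrix of ψ(g,h) = ρ(g,h)·∏_{d∈S} ∂_d(g,h)^{x_d} is Hadamard equals the dimension of ℚ[x_d : d ∈ S]/J as a ℚ-vector space. -/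
open Matrix MvPolynomial

set_option linter.unusedSectionVars false

namespace HadAux

variable {σ : Type*} [Fintype σ] [DecidableEq σ]

def ptOf (b : σ → Bool) : σ → ℚ := fun i => if b i then 1 else 0

noncomputable def indP (b : σ → Bool) : MvPolynomial σ ℚ :=
  ∏ i : σ, if b i then X i else 1 - X i

def sqSet (σ : Type*) : Set (MvPolynomial σ ℚ) := {p | ∃ i, p = X i ^ 2 - X i}

lemma eval_indP (b b' : σ → Bool) :
    eval (ptOf b') (indP b) = if b' = b then 1 else 0 := by
  classical
  unfold indP
  rw [map_prod]
  by_cases h : b' = b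
  · subst h
    rw [if_pos rfl]
    apply Finset.prod_eq_one
    intro i _
    by_cases hb : b' i <;> simp [hb, ptOf]
  · rw [if_neg h]
    obtain ⟨i, hi⟩ : ∃ i, b' i ≠ b i := by
      by_contra hc; push_neg at hc; exact h (funext hc)
    apply Finset.prod_eq_zero (Finset.mem_univ i)
    rcases Bool.eq_false_or_eq_true (b i) with hb | hb <;>
      rcases Bool.eq_false_or_eq_true (b' i) with hb' | hb' <;>
      simp [hb, hb', ptOf] at hi ⊢

lemma sq_vanish (b : σ → Bool) {f : MvPolynomial σ ℚ} (hf : f ∈ Ideal.span (sqSet σ)) :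
    eval (ptOf b) f = 0 := by
  have hle : Ideal.span (sqSet σ) ≤ RingHom.ker (eval (ptOf b)) := by
    rw [Ideal.span_le]
    rintro p ⟨i, rfl⟩
    simp only [SetLike.mem_coe, RingHom.mem_ker, map_sub, map_pow, eval_X]
    by_cases hb : b i <;> simp [ptOf, hb]
  exact hle hf

lemma multilinear_eq_zero {f : MvPolynomial σ ℚ}
    (hml : ∀ m ∈ f.support, ∀ i, m i ≤ 1)
    (hv : ∀ b : σ → Bool, eval (ptOf b) f = 0) : f = 0 := by
  classical
  by_contra hf
  have hsupp : (f.support : Set (σ →₀ ℕ)).Nonempty := by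
    simpa [Finset.coe_nonempty, support_nonempty] using hf
  obtain ⟨m, hm, hmin⟩ := Set.Finite.exists_minimalFor (fun m : σ →₀ ℕ => m.support)
    (f.support : Set _) f.support.finite_toSet hsupp
  simp only [Finset.mem_coe] at hm
  set b : σ → Bool := fun i => decide (m i ≠ 0) with hbdef
  have h1 : ∀ d ∈ f.support, (∏ i ∈ d.support, ptOf b i ^ d i) = if d = m then 1 else 0 := by
    intro d hd
    by_cases hdm : d = m
    · subst hdm
      rw [if_pos rfl]
      apply Finset.prod_eq_one
      intro i hi
      have : d i ≠ 0 := Finsupp.mem_support_iff.mp hi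
      simp [ptOf, hbdef, this]
    · rw [if_neg hdm]
      have hns : ¬ d.support ⊆ m.support := by
        intro hsub
        have heq : d.support = m.support := le_antisymm hsub (hmin (Finset.mem_coe.mpr hd) hsub)
        apply hdm
        ext i
        by_cases hi : i ∈ d.support
        · have hi' : i ∈ m.support := heq ▸ hi
          have h1 := hml d hd i
          have h2 := hml m hm i
          have h3 := Finsupp.mem_support_iff.mp hi
          have h4 := Finsupp.mem_support_iff.mp hi'
          omega
        · have hi' : i ∉ m.support := heq ▸ hi
          have h3 := Finsupp.notMem_support_iff.mp hi
          have h4 := Finsupp.notMem_support_iff.mp hi'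
          omega
      obtain ⟨i, hid, him⟩ := Finset.not_subset.mp hns
      apply Finset.prod_eq_zero hid
      have h3 := Finsupp.mem_support_iff.mp hid
      have h4 := Finsupp.notMem_support_iff.mp him
      simp [ptOf, hbdef, h4]
      omega
  have heval : eval (ptOf b) f = f.coeff m := by
    rw [eval_eq]
    rw [Finset.sum_congr rfl fun d hd => by rw [h1 d hd]]
    simp only [mul_ite, mul_one, mul_zero]
    rw [Finset.sum_ite_eq' f.support m (fun d => f.coeff d)]
    rw [if_pos hm]
  have := hv b
  rw [heval] at this
  exact (MvPolynomial.mem_support_iff.mp hm) this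

lemma exists_multilinear (f : MvPolynomial σ ℚ) :
    ∃ g : MvPolynomial σ ℚ, (∀ m ∈ g.support, ∀ i, m i ≤ 1) ∧
      f - g ∈ Ideal.span (sqSet σ) := by
  classical
  induction f using MvPolynomial.induction_on with
  | C a =>
    refine ⟨C a, ?_, by simp⟩
    intro m hm i
    have hc := MvPolynomial.mem_support_iff.mp hm
    rw [coeff_C] at hc
    by_cases h0 : (0 : σ →₀ ℕ) = m
    · rw [← h0]; simp
    · rw [if_neg h0] at hc; exact absurd rfl hc
  | add p q hp hq =>
    obtain ⟨g1, hml1, hmem1⟩ := hp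
    obtain ⟨g2, hml2, hmem2⟩ := hq
    refine ⟨g1 + g2, ?_, ?_⟩
    · intro m hm i
      rcases Finset.mem_union.mp (MvPolynomial.support_add hm) with h | h
      · exact hml1 m h i
      · exact hml2 m h i
    · have : p + q - (g1 + g2) = (p - g1) + (q - g2) := by ring
      rw [this]
      exact Ideal.add_mem _ hmem1 hmem2
  | mul_X p i hp =>
    obtain ⟨g, hml, hmem⟩ := hp
    have hX : (X i : MvPolynomial σ ℚ) = monomial (Finsupp.single i 1) 1 := by
      rw [← X_pow_eq_monomial, pow_one]
    have key : ∀ m : σ →₀ ℕ, ∀ c : ℚ, (∀ j, m j ≤ 1) → ∃ g' : MvPolynomial σ ℚ,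
        (∀ m' ∈ g'.support, ∀ j, m' j ≤ 1) ∧
        (monomial m c) * X i - g' ∈ Ideal.span (sqSet σ) := by
      intro m c hm
      by_cases hmi : m i = 0
      · refine ⟨monomial (m + Finsupp.single i 1) c, ?_, ?_⟩
        · intro m' hm' j
          have := MvPolynomial.support_monomial_subset hm'
          rw [Finset.mem_singleton] at this
          subst this
          rw [Finsupp.add_apply, Finsupp.single_apply]
          by_cases hj : i = j
          · subst hj; simp [hmi]
          · rw [if_neg hj]; simpa using hm j
        · rw [hX, monomial_mul, mul_one, sub_self]
          exact Ideal.zero_mem _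
      · set n := m - Finsupp.single i 1 with hndef
        have hn : n + Finsupp.single i 1 = m := by
          ext j
          rw [Finsupp.add_apply, hndef, Finsupp.tsub_apply, Finsupp.single_apply]
          by_cases hj : i = j
          · subst hj; simp; omega
          · rw [if_neg hj]; omega
        refine ⟨monomial m c, ?_, ?_⟩
        · intro m' hm' j
          have := MvPolynomial.support_monomial_subset hm'
          rw [Finset.mem_singleton] at this
          subst this
          exact hm j
        · have e1 : m + Finsupp.single i 1 = n + Finsupp.single i 2 := by
            ext j
            rw [Finsupp.add_apply, Finsupp.add_apply, Finsupp.single_apply,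
              Finsupp.single_apply]
            have := congrFun (congrArg (fun f : σ →₀ ℕ => (f : σ → ℕ)) hn) j
            simp only [Finsupp.coe_add, Pi.add_apply, Finsupp.single_apply] at this
            by_cases hj : i = j
            · subst hj; simp at this ⊢; omega
            · simp only [if_neg hj] at this ⊢; omega
          have heq : monomial m c * X i - monomial m c = monomial n c * (X i ^ 2 - X i) := by
            rw [mul_sub, X_pow_eq_monomial, hX, monomial_mul, monomial_mul, monomial_mul,
              mul_one, e1, ← hn]
          rw [heq]
          exact Ideal.mul_mem_left _ _ (Ideal.subset_span ⟨i, rfl⟩)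
    -- assemble
    choose g' hg'ml hg'mem using fun m (hm : m ∈ g.support) => key m (g.coeff m) (fun j => hml m hm j)
    refine ⟨∑ m ∈ g.support.attach, g' m.1 m.2, ?_, ?_⟩
    · intro m' hm' j
      have := MvPolynomial.support_sum hm'
      rw [Finset.mem_biUnion] at this
      obtain ⟨a, _, ha⟩ := this
      exact hg'ml a.1 a.2 m' ha j
    · have hgx : g * X i = ∑ m ∈ g.support.attach, monomial m.1 (g.coeff m.1) * X i := by
        rw [← Finset.sum_mul, Finset.sum_attach g.support fun m => monomial m (g.coeff m),
          support_sum_monomial_coeff]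
      have h2 : g * X i - ∑ m ∈ g.support.attach, g' m.1 m.2 ∈ Ideal.span (sqSet σ) := by
        rw [hgx, ← Finset.sum_sub_distrib]
        exact Ideal.sum_mem _ fun m _ => hg'mem m.1 m.2
      have h3 : p * X i - ∑ m ∈ g.support.attach, g' m.1 m.2 =
          (p - g) * X i + (g * X i - ∑ m ∈ g.support.attach, g' m.1 m.2) := by ring
      rw [h3]
      exact Ideal.add_mem _ (Ideal.mul_mem_right _ _ hmem) h2


lemma mem_sq_of_vanish {f : MvPolynomial σ ℚ}
    (hv : ∀ b : σ → Bool, eval (ptOf b) f = 0) : f ∈ Ideal.span (sqSet σ) := by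
  obtain ⟨g, hml, hmem⟩ := exists_multilinear f
  have hg : g = 0 := by
    apply multilinear_eq_zero hml
    intro b
    have h1 := sq_vanish b hmem
    rw [map_sub] at h1
    rw [hv b] at h1
    linarith
  rw [hg, sub_zero] at hmem
  exact hmem

theorem finrank_quot (F : Set (MvPolynomial σ ℚ)) :
    Module.finrank ℚ (MvPolynomial σ ℚ ⧸ Ideal.span (sqSet σ ∪ F)) =
      Nat.card {b : σ → Bool // ∀ f ∈ F, eval (ptOf b) f = 0} := by
  classical
  set J := Ideal.span (sqSet σ ∪ F) with hJ
  set Z := {b : σ → Bool // ∀ f ∈ F, eval (ptOf b) f = 0} with hZ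
  let Φ : MvPolynomial σ ℚ →ₐ[ℚ] (Z → ℚ) :=
    Pi.algHom ℚ (fun _ : Z => ℚ) fun z => MvPolynomial.aeval (ptOf z.1)
  have hΦ : ∀ (f : MvPolynomial σ ℚ) (z : Z), Φ f z = eval (ptOf z.1) f := by
    intro f z
    show MvPolynomial.aeval (ptOf z.1) f = eval (ptOf z.1) f
    rw [← coe_aeval_eq_eval]
    rfl
  have hsq : Ideal.span (sqSet σ) ≤ J := Ideal.span_mono Set.subset_union_left
  have hker : RingHom.ker Φ = J := by
    apply le_antisymm
    · intro f hf
      rw [RingHom.mem_ker] at hf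
      have hfz : ∀ z : Z, eval (ptOf z.1) f = 0 := by
        intro z
        rw [← hΦ f z, hf]
        rfl
      have hrep : f - ∑ b : σ → Bool, C (eval (ptOf b) f) * indP b ∈ Ideal.span (sqSet σ) := by
        apply mem_sq_of_vanish
        intro b'
        rw [map_sub, map_sum]
        simp only [_root_.map_mul, eval_C, eval_indP, mul_ite, mul_one, mul_zero]
        rw [Finset.sum_ite_eq Finset.univ b' (fun b => eval (ptOf b) f), if_pos (Finset.mem_univ b')]
        exact sub_self _
      have hterm : ∀ b : σ → Bool, C (eval (ptOf b) f) * indP b ∈ J := by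
        intro b
        by_cases hbZ : ∀ f₀ ∈ F, eval (ptOf b) f₀ = 0
        · have h0 : eval (ptOf b) f = 0 := hfz ⟨b, hbZ⟩
          rw [h0, map_zero, zero_mul]
          exact J.zero_mem
        · push_neg at hbZ
          obtain ⟨f₀, hf₀F, hf₀⟩ := hbZ
          have hE : f₀ * indP b - C (eval (ptOf b) f₀) * indP b ∈ Ideal.span (sqSet σ) := by
            apply mem_sq_of_vanish
            intro b'
            rw [map_sub, _root_.map_mul, _root_.map_mul, eval_C, eval_indP]
            by_cases h : b' = b
            · subst h; simp
            · simp [h]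
          have h2 : f₀ * indP b ∈ J :=
            Ideal.mul_mem_right _ _ (Ideal.subset_span (Set.mem_union_right _ hf₀F))
          have h1 : C (eval (ptOf b) f₀) * indP b ∈ J := by
            have h3 := J.sub_mem h2 (hsq hE)
            rw [sub_sub_cancel] at h3
            exact h3
          have h4 : indP b ∈ J := by
            have h5 := J.mul_mem_left (C (eval (ptOf b) f₀)⁻¹) h1
            rw [← mul_assoc, ← _root_.map_mul, inv_mul_cancel₀ hf₀, _root_.map_one, one_mul] at h5
            exact h5
          exact J.mul_mem_left _ h4
      have hdecomp : f = (f - ∑ b : σ → Bool, C (eval (ptOf b) f) * indP b) +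
          ∑ b : σ → Bool, C (eval (ptOf b) f) * indP b := by ring
      rw [hdecomp]
      exact J.add_mem (hsq hrep) (Ideal.sum_mem _ fun b _ => hterm b)
    · rw [hJ, Ideal.span_le]
      rintro p (⟨i, rfl⟩ | hF)
      · rw [SetLike.mem_coe, RingHom.mem_ker]
        funext z
        rw [hΦ]
        simp only [map_sub, map_pow, eval_X]
        show ptOf z.1 i ^ 2 - ptOf z.1 i = 0
        by_cases hb : z.1 i <;> simp [ptOf, hb]
      · rw [SetLike.mem_coe, RingHom.mem_ker]
        funext z
        rw [hΦ, z.2 p hF]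
        rfl
  have hsurj : Function.Surjective Φ := by
    intro u
    refine ⟨∑ z : Z, C (u z) * indP z.1, ?_⟩
    funext z'
    rw [map_sum]
    rw [Finset.sum_apply]
    have : ∀ z : Z, Φ (C (u z) * indP z.1) z' = if z' = z then u z else 0 := by
      intro z
      rw [hΦ, _root_.map_mul, eval_C, eval_indP]
      by_cases h : z' = z
      · subst h; simp
      · rw [if_neg (fun hc => h (Subtype.ext hc)), if_neg h, mul_zero]
    rw [Finset.sum_congr rfl fun z _ => this z]
    rw [Finset.sum_ite_eq Finset.univ z' u, if_pos (Finset.mem_univ z')]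
  have e := Ideal.quotientKerAlgEquivOfSurjective hsurj
  rw [← hker]
  rw [e.toLinearEquiv.finrank_eq]
  rw [Module.finrank_pi ℚ, Nat.card_eq_fintype_card]

end HadAux

namespace HadAux2

def r4 (u v : ZMod 2 × ZMod 2) : ℤ :=
  (-1) ^ (u.1.val * v.1.val + u.1.val * v.2.val + u.2.val * v.2.val)

variable (t : ℕ) [NeZero t]

abbrev σZ (t : ℕ) [NeZero t] := {d : GZ t // d ∈ SZ t}

lemma rhoZ_eq_r4 (p q : GZ t) : rhoZ t p q = r4 p.2 q.2 := rfl

lemma charMap_mul_self {A : Type*} [DecidableEq A] (d g : A) :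
    charMap d g * charMap d g = 1 := by
  unfold charMap; split_ifs <;> norm_num

lemma elemCob_mul_self {A : Type*} [AddGroup A] [DecidableEq A] (d g h : A) :
    elemCob d g h * elemCob d g h = 1 := by
  unfold elemCob
  have h1 := charMap_mul_self d g
  have h2 := charMap_mul_self d h
  have h3 := charMap_mul_self d (g + h)
  calc charMap d g * charMap d h * charMap d (g + h) *
        (charMap d g * charMap d h * charMap d (g + h))
      = (charMap d g * charMap d g) * ((charMap d h * charMap d h) *
        (charMap d (g + h) * charMap d (g + h))) := by ring
    _ = 1 := by rw [h1, h2, h3]; norm_num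

lemma rhoZ_mul_self (p q : GZ t) : rhoZ t p q * rhoZ t p q = 1 := by
  unfold rhoZ
  rw [← pow_add, ← two_mul, pow_mul]
  norm_num

variable (x : σZ t → ℕ)

def psiF (g h : GZ t) : ℤ :=
  rhoZ t g h * ∏ d : σZ t, elemCob (d : GZ t) g h ^ x d

def rowSum (g : GZ t) : ℤ := ∑ h : GZ t, psiF t x g h

lemma prod_mul_self (g h : GZ t) :
    (∏ d : σZ t, elemCob (d : GZ t) g h ^ x d) *
      (∏ d : σZ t, elemCob (d : GZ t) g h ^ x d) = 1 := by
  rw [← Finset.prod_mul_distrib]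
  apply Finset.prod_eq_one
  intro d _
  rw [← mul_pow, elemCob_mul_self, one_pow]

lemma psiF_mul_self (g h : GZ t) : psiF t x g h * psiF t x g h = 1 := by
  unfold psiF
  have h1 := rhoZ_mul_self t g h
  have h2 := prod_mul_self t x g h
  calc rhoZ t g h * (∏ d : σZ t, elemCob (d : GZ t) g h ^ x d) *
        (rhoZ t g h * ∏ d : σZ t, elemCob (d : GZ t) g h ^ x d)
      = (rhoZ t g h * rhoZ t g h) * ((∏ d : σZ t, elemCob (d : GZ t) g h ^ x d) *
        (∏ d : σZ t, elemCob (d : GZ t) g h ^ x d)) := by ring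
    _ = 1 := by rw [h1, h2]; norm_num

lemma r4_cocycle : ∀ u v w : ZMod 2 × ZMod 2,
    r4 u v * r4 (u + v) w = r4 v w * r4 u (v + w) := by decide

lemma rhoZ_cocycle (p q r : GZ t) :
    rhoZ t p q * rhoZ t (p + q) r = rhoZ t q r * rhoZ t p (q + r) := by
  rw [rhoZ_eq_r4, rhoZ_eq_r4, rhoZ_eq_r4, rhoZ_eq_r4]
  exact r4_cocycle p.2 q.2 r.2

lemma elemCob_cocycle {A : Type*} [AddCommGroup A] [DecidableEq A] (d g h k : A) :
    elemCob d g h * elemCob d (g + h) k = elemCob d h k * elemCob d g (h + k) := by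
  unfold elemCob charMap
  rw [← add_assoc]
  split_ifs <;> ring

lemma psiF_cocycle (g h k : GZ t) :
    psiF t x g h * psiF t x (g + h) k = psiF t x h k * psiF t x g (h + k) := by
  unfold psiF
  have hP : (∏ d : σZ t, elemCob (d : GZ t) g h ^ x d) *
      (∏ d : σZ t, elemCob (d : GZ t) (g + h) k ^ x d) =
      (∏ d : σZ t, elemCob (d : GZ t) h k ^ x d) *
      (∏ d : σZ t, elemCob (d : GZ t) g (h + k) ^ x d) := by
    rw [← Finset.prod_mul_distrib, ← Finset.prod_mul_distrib]
    apply Finset.prod_congr rfl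
    intro d _
    rw [← mul_pow, ← mul_pow, elemCob_cocycle]
  rw [mul_mul_mul_comm, rhoZ_cocycle, hP, mul_mul_mul_comm]

lemma psiF_zero_right (h : GZ t) : psiF t x 0 h = psiF t x 0 0 := by
  have h1 := psiF_cocycle t x 0 0 h
  rw [add_zero, zero_add] at h1
  have h2 := psiF_mul_self t x 0 h
  rw [h2] at h1
  -- h1 : ψ00 * ψ0h = 1
  have h3 := psiF_mul_self t x 0 0
  calc psiF t x 0 h = (psiF t x 0 0 * psiF t x 0 0) * psiF t x 0 h := by rw [h3, one_mul]
    _ = psiF t x 0 0 * (psiF t x 0 0 * psiF t x 0 h) := by ring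
    _ = psiF t x 0 0 := by rw [h1, mul_one]

lemma sum_row_mul (g k : GZ t) :
    ∑ h : GZ t, psiF t x g h * psiF t x k h =
      psiF t x (g - k) k * rowSum t x (g - k) := by
  have key : ∀ h : GZ t, psiF t x g h * psiF t x k h =
      psiF t x (g - k) k * psiF t x (g - k) (k + h) := by
    intro h
    have hco := psiF_cocycle t x (g - k) k h
    rw [sub_add_cancel] at hco
    have hA2 := psiF_mul_self t x (g - k) k
    have hC2 := psiF_mul_self t x k h
    set A := psiF t x (g - k) k
    set B := psiF t x g h
    set C := psiF t x k h
    set D := psiF t x (g - k) (k + h)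
    calc B * C = (A * A) * (B * C) := by rw [hA2, one_mul]
      _ = (A * B) * (A * C) := by ring
      _ = (C * D) * (A * C) := by rw [hco]
      _ = (A * D) * (C * C) := by ring
      _ = A * D := by rw [hC2, mul_one]
  rw [Finset.sum_congr rfl fun h _ => key h, ← Finset.mul_sum]
  congr 1
  unfold rowSum
  exact Fintype.sum_equiv (Equiv.addLeft k) _ _ (fun h => rfl)

lemma card_GZ : Fintype.card (GZ t) = 4 * t := by
  rw [Fintype.card_prod, Fintype.card_prod, ZMod.card, ZMod.card]
  ring

lemma sum_row_sq (g : GZ t) :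
    ∑ h : GZ t, psiF t x g h * psiF t x g h = (4 * t : ℤ) := by
  rw [Finset.sum_congr rfl fun h _ => psiF_mul_self t x g h]
  rw [Finset.sum_const, Finset.card_univ, card_GZ]
  simp

lemma hadamard_iff :
    (Matrix.of (psiF t x) * (Matrix.of (psiF t x))ᵀ =
      (4 * t : ℤ) • (1 : Matrix (GZ t) (GZ t) ℤ)) ↔
      ∀ g : GZ t, g ≠ 0 → rowSum t x g = 0 := by
  constructor
  · intro H g hg
    have hent : ((Matrix.of (psiF t x) * (Matrix.of (psiF t x))ᵀ) g 0)
        = ((4 * t : ℤ) • (1 : Matrix (GZ t) (GZ t) ℤ)) g 0 := by rw [H]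
    rw [Matrix.mul_apply] at hent
    simp only [Matrix.transpose_apply, Matrix.of_apply] at hent
    rw [sum_row_mul, sub_zero] at hent
    rw [Matrix.smul_apply, Matrix.one_apply_ne hg, smul_zero] at hent
    have h2 := psiF_mul_self t x g 0
    have h3 := congrArg (fun z => psiF t x g 0 * z) hent
    simp only [mul_zero] at h3
    rw [← mul_assoc, h2, one_mul] at h3
    exact h3
  · intro hrow
    ext g k
    rw [Matrix.mul_apply]
    simp only [Matrix.transpose_apply, Matrix.of_apply]
    by_cases hgk : g = k
    · subst hgk
      rw [sum_row_sq, Matrix.smul_apply, Matrix.one_apply_eq, smul_eq_mul, mul_one]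
    · rw [sum_row_mul, hrow _ (sub_ne_zero.mpr hgk), mul_zero, Matrix.smul_apply,
        Matrix.one_apply_ne hgk, smul_zero]

lemma rowSum_neg (g : GZ t) :
    rowSum t x (-g) = (psiF t x g (-g) * psiF t x 0 0) * rowSum t x g := by
  have key : ∀ h : GZ t, psiF t x (-g) h =
      (psiF t x g (-g) * psiF t x 0 0) * psiF t x g (-g + h) := by
    intro h
    have hco := psiF_cocycle t x g (-g) h
    rw [add_neg_cancel] at hco
    rw [psiF_zero_right t x h] at hco
    -- hco : ψ(g,-g) * ψ(0,0) = ψ(-g,h) * ψ(g,-g+h)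
    have hD2 := psiF_mul_self t x g (-g + h)
    calc psiF t x (-g) h
        = psiF t x (-g) h * (psiF t x g (-g + h) * psiF t x g (-g + h)) := by
          rw [hD2, mul_one]
      _ = (psiF t x (-g) h * psiF t x g (-g + h)) * psiF t x g (-g + h) := by ring
      _ = (psiF t x g (-g) * psiF t x 0 0) * psiF t x g (-g + h) := by rw [← hco]
  unfold rowSum
  rw [Finset.sum_congr rfl fun h _ => key h, ← Finset.mul_sum]
  congr 1
  exact Fintype.sum_equiv (Equiv.addLeft (-g)) _ _ (fun h => rfl)

lemma r4_neg : ∀ u v : ZMod 2 × ZMod 2, u ≠ 0 → r4 u (u + v) = - r4 u v := by decide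

lemma rowSum_eq_zero_of_two {g : GZ t} (hg2 : g.2 ≠ 0) (hgg : g + g = 0) :
    rowSum t x g = 0 := by
  unfold rowSum
  apply Finset.sum_ninvolution (fun h => g + h)
  · intro h
    have hel : ∀ d : σZ t, elemCob (d : GZ t) g (g + h) = elemCob (d : GZ t) g h := by
      intro d
      unfold elemCob
      rw [← add_assoc, hgg, zero_add]
      ring
    have hrho : rhoZ t g (g + h) = - rhoZ t g h := by
      rw [rhoZ_eq_r4, rhoZ_eq_r4]
      exact r4_neg g.2 h.2 hg2
    have hP : (∏ d : σZ t, elemCob (d : GZ t) g (g + h) ^ x d) =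
        ∏ d : σZ t, elemCob (d : GZ t) g h ^ x d :=
      Finset.prod_congr rfl fun d _ => by rw [hel d]
    unfold psiF
    rw [hP, hrho]
    ring
  · intro h _
    intro hEq
    have : g = 0 := by
      have := add_eq_right.mp hEq
      exact this
    rw [this] at hg2
    exact hg2 rfl
  · intro h; exact Finset.mem_univ _
  · intro h
    rw [← add_assoc, hgg, zero_add]

lemma per_d (hx : ∀ d, x d = 0 ∨ x d = 1) (g h : GZ t) (hgh : h ≠ g + h) (d : σZ t) :
    ((elemCob (d : GZ t) g h ^ x d : ℤ) : ℚ) =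
      ((charMap (d : GZ t) g : ℤ) : ℚ) ^ x d *
        (if (d : GZ t) = h ∨ (d : GZ t) = g + h then 1 - 2 * (x d : ℚ) else 1) := by
  rcases hx d with h0 | h1
  · rw [h0]
    simp only [pow_zero, Nat.cast_zero, mul_zero, sub_zero, Int.cast_one, one_mul]
    split_ifs <;> norm_num
  · rw [h1]
    simp only [pow_one, Nat.cast_one]
    norm_num
    by_cases hB : (d : GZ t) = h <;> by_cases hC : (d : GZ t) = g + h
    · exact absurd (hB.symm.trans hC) hgh
    · rw [if_pos (Or.inl hB)]
      unfold elemCob charMap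
      rw [if_pos hB.symm, if_neg (fun hc : g + h = (d : GZ t) => hC hc.symm)]
      split_ifs <;> push_cast <;> ring
    · rw [if_pos (Or.inr hC)]
      unfold elemCob charMap
      rw [if_neg (fun hc : h = (d : GZ t) => hB hc.symm), if_pos hC.symm]
      split_ifs <;> push_cast <;> ring
    · rw [if_neg (by tauto)]
      unfold elemCob charMap
      rw [if_neg (fun hc : h = (d : GZ t) => hB hc.symm),
        if_neg (fun hc : g + h = (d : GZ t) => hC hc.symm)]
      split_ifs <;> push_cast <;> ring

lemma charProd_mul_self (g : GZ t) :
    (∏ d : σZ t, ((charMap (d : GZ t) g : ℤ) : ℚ) ^ x d) *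
      (∏ d : σZ t, ((charMap (d : GZ t) g : ℤ) : ℚ) ^ x d) = 1 := by
  rw [← Finset.prod_mul_distrib]
  apply Finset.prod_eq_one
  intro d _
  rw [← mul_pow, ← Int.cast_mul, charMap_mul_self]
  norm_num

lemma eval_rowPoly (hx : ∀ d, x d = 0 ∨ x d = 1) (s : ℕ) (hs0 : iota t s ≠ 0) :
    ((rowSum t x (iota t s) : ℤ) : ℚ) =
      (∏ d : σZ t, ((charMap (d : GZ t) (iota t s) : ℤ) : ℚ) ^ x d) *
        MvPolynomial.eval (fun d : σZ t => (x d : ℚ)) (rowPolyZ t s) := by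
  set g := iota t s with hgdef
  have hgh : ∀ h : GZ t, h ≠ g + h := by
    intro h hEq
    exact hs0 (add_eq_right.mp hEq.symm)
  unfold rowPolyZ rowSum
  rw [← hgdef, map_sum]
  push_cast
  rw [Finset.mul_sum]
  apply Finset.sum_congr rfl
  intro h _
  rw [_root_.map_mul, eval_C, map_prod]
  have hfac : ∀ d : σZ t,
      MvPolynomial.eval (fun d : σZ t => (x d : ℚ))
        (if (d : GZ t) = h ∨ (d : GZ t) = g + h then 1 - 2 * MvPolynomial.X d else 1) =
        (if (d : GZ t) = h ∨ (d : GZ t) = g + h then 1 - 2 * (x d : ℚ) else 1) := by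
    intro d
    split_ifs <;> simp
  rw [Finset.prod_congr rfl fun d _ => hfac d]
  have hpsi : ((psiF t x g h : ℤ) : ℚ) =
      ((rhoZ t g h : ℤ) : ℚ) * ∏ d : σZ t, ((elemCob (d : GZ t) g h : ℤ) : ℚ) ^ x d := by
    unfold psiF; push_cast; ring
  have hprod : ∏ d : σZ t, ((elemCob (d : GZ t) g h : ℤ) : ℚ) ^ x d =
      (∏ d : σZ t, ((charMap (d : GZ t) g : ℤ) : ℚ) ^ x d) *
      ∏ d : σZ t, (if (d : GZ t) = h ∨ (d : GZ t) = g + h then 1 - 2 * (x d : ℚ) else 1) := by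
    rw [← Finset.prod_mul_distrib]
    apply Finset.prod_congr rfl
    intro d _
    have := per_d t x hx g h (hgh h) d
    push_cast at this ⊢
    rw [this]
  rw [hpsi, hprod]
  ring

lemma add_self_two : ∀ u : ZMod 2 × ZMod 2, u + u = 0 := by decide

lemma rowsums_iff (hx : ∀ d, x d = 0 ∨ x d = 1) (hodd : Odd t) :
    (∀ g : GZ t, g ≠ 0 → rowSum t x g = 0) ↔
      ∀ s : ℕ, 5 ≤ s → s ≤ 2 * t + 2 →
        MvPolynomial.eval (fun d : σZ t => (x d : ℚ)) (rowPolyZ t s) = 0 := by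
  constructor
  · intro hrow s hs5 hs2
    have hg0 : iota t s ≠ 0 := by
      intro hEq
      have h1 : (iota t s).1 = 0 := by rw [hEq]; rfl
      have h2 : (((s - 1) / 4 : ℕ) : ZMod t) = 0 := h1
      rw [ZMod.natCast_eq_zero_iff] at h2
      have h3 := Nat.le_of_dvd (by omega) h2
      omega
    have he := eval_rowPoly t x hx s hg0
    rw [hrow _ hg0] at he
    push_cast at he
    have hc := charProd_mul_self t x (iota t s)
    have h2 : ((∏ d : σZ t, ((charMap (d : GZ t) (iota t s) : ℤ) : ℚ) ^ x d) *
        (∏ d : σZ t, ((charMap (d : GZ t) (iota t s) : ℤ) : ℚ) ^ x d)) *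
        MvPolynomial.eval (fun d : σZ t => (x d : ℚ)) (rowPolyZ t s) =
        (∏ d : σZ t, ((charMap (d : GZ t) (iota t s) : ℤ) : ℚ) ^ x d) * 0 := by
      rw [mul_assoc, ← he]
    rw [hc, one_mul, mul_zero] at h2
    exact h2
  · intro hev
    have hhalf : ∀ g : GZ t, g.1 ≠ 0 → 2 * g.1.val < t → rowSum t x g = 0 := by
      intro g hg1 h2A
      have hAt : g.1.val < t := ZMod.val_lt g.1
      have hA0 : 0 < g.1.val := by
        rcases Nat.eq_zero_or_pos g.1.val with h0 | h0
        · exact absurd ((ZMod.val_eq_zero g.1).mp h0) hg1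
        · exact h0
      have hB : g.2.1.val < 2 := ZMod.val_lt g.2.1
      have hC : g.2.2.val < 2 := ZMod.val_lt g.2.2
      set s := 4 * g.1.val + 2 * g.2.1.val + g.2.2.val + 1 with hs
      have hios : iota t s = g := by
        unfold iota
        have e1 : (s - 1) / 4 = g.1.val := by omega
        have e2 : (s - 1) % 4 / 2 = g.2.1.val := by omega
        have e3 : (s - 1) % 2 = g.2.2.val := by omega
        rw [e1, e2, e3]
        rw [ZMod.natCast_rightInverse g.1, ZMod.natCast_rightInverse g.2.1,
          ZMod.natCast_rightInverse g.2.2]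
      have hg0 : iota t s ≠ 0 := by
        rw [hios]
        intro hEq
        apply hg1
        rw [hEq]
        rfl
      have he := eval_rowPoly t x hx s hg0
      rw [hios] at he
      rw [hev s (by omega) (by omega), mul_zero] at he
      exact_mod_cast he
    intro g hg
    by_cases hg1 : g.1 = 0
    · apply rowSum_eq_zero_of_two t x
      · intro h2
        exact hg (Prod.ext_iff.mpr ⟨hg1, h2⟩)
      · rw [Prod.ext_iff]
        constructor
        · show g.1 + g.1 = (0 : ZMod t)
          rw [hg1, add_zero]
        · show g.2 + g.2 = (0 : ZMod 2 × ZMod 2)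
          exact add_self_two g.2
    · by_cases h2A : 2 * g.1.val < t
      · exact hhalf g hg1 h2A
      · have hneq : 2 * g.1.val ≠ t := by
          rcases hodd with ⟨m, hm⟩
          omega
        have hval : (-g).1.val = t - g.1.val := by
          show (-g.1).val = t - g.1.val
          rw [ZMod.neg_val, if_neg hg1]
        have hAt : g.1.val < t := ZMod.val_lt g.1
        have hneg1 : (-g).1 ≠ 0 := by
          intro hEq
          have h0 := (ZMod.val_eq_zero (-g).1).mpr hEq
          rw [hval] at h0
          omega
        have h2A' : 2 * (-g).1.val < t := by
          rw [hval]
          omega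
        have hr := hhalf (-g) hneg1 h2A'
        have hrn := rowSum_neg t x (-g)
        rw [neg_neg, hr, mul_zero] at hrn
        exact hrn

end HadAux2

/-- the number of `{0,1}`-tuples whose associated cocyclic matrix over
`ℤ_t × ℤ_2 × ℤ_2` is Hadamard equals `dim_ℚ (ℚ[x_d : d ∈ S]/J)`. -/
theorem card_hadamard_tuples_Z_eq_finrank (t : ℕ) [NeZero t] (ht : 1 < t) (htodd : Odd t) :
    Nat.card {x : {d : GZ t // d ∈ SZ t} → ℕ //
        (∀ d, x d = 0 ∨ x d = 1) ∧
        (Matrix.of fun g h : GZ t =>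
              rhoZ t g h *
                ∏ d : {d : GZ t // d ∈ SZ t}, elemCob (d : GZ t) g h ^ x d) *
            (Matrix.of fun g h : GZ t =>
              rhoZ t g h *
                ∏ d : {d : GZ t // d ∈ SZ t}, elemCob (d : GZ t) g h ^ x d)ᵀ =
          (4 * t : ℤ) • (1 : Matrix (GZ t) (GZ t) ℤ)} =
      Module.finrank ℚ (MvPolynomial {d : GZ t // d ∈ SZ t} ℚ ⧸ idealZ t) := by
  classical
  set F : Set (MvPolynomial {d : GZ t // d ∈ SZ t} ℚ) :=
    {p | ∃ s : ℕ, 5 ≤ s ∧ s ≤ 2 * t + 2 ∧ p = rowPolyZ t s} with hF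
  have hideal : idealZ t = Ideal.span (HadAux.sqSet {d : GZ t // d ∈ SZ t} ∪ F) := rfl
  rw [hideal, HadAux.finrank_quot F]
  apply Nat.card_congr
  have hcond : ∀ (x : {d : GZ t // d ∈ SZ t} → ℕ), (∀ d, x d = 0 ∨ x d = 1) →
      (((Matrix.of fun g h : GZ t =>
            rhoZ t g h *
              ∏ d : {d : GZ t // d ∈ SZ t}, elemCob (d : GZ t) g h ^ x d) *
          (Matrix.of fun g h : GZ t =>
            rhoZ t g h *
              ∏ d : {d : GZ t // d ∈ SZ t}, elemCob (d : GZ t) g h ^ x d)ᵀ =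
        (4 * t : ℤ) • (1 : Matrix (GZ t) (GZ t) ℤ)) ↔
        ∀ f ∈ F, MvPolynomial.eval (fun d => ((x d : ℕ) : ℚ)) f = 0) := by
    intro x hx
    have h1 : (Matrix.of fun g h : GZ t =>
        rhoZ t g h * ∏ d : {d : GZ t // d ∈ SZ t}, elemCob (d : GZ t) g h ^ x d) =
        Matrix.of (HadAux2.psiF t x) := rfl
    rw [h1]
    rw [HadAux2.hadamard_iff t x, HadAux2.rowsums_iff t x hx htodd]
    constructor
    · rintro hv f ⟨s, h5, h2, rfl⟩
      exact hv s h5 h2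
    · intro hv s h5 h2
      exact hv _ ⟨s, h5, h2, rfl⟩
  refine
    { toFun := fun z => ⟨fun d => decide (z.1 d = 1), ?_⟩
      invFun := fun z => ⟨fun d => if z.1 d then 1 else 0, ?_, ?_⟩
      left_inv := ?_
      right_inv := ?_ }
  · intro f hf
    have hp : HadAux.ptOf (fun d => decide (z.1 d = 1)) = fun d => ((z.1 d : ℕ) : ℚ) := by
      funext d
      rcases z.2.1 d with h | h <;> simp [HadAux.ptOf, h]
    rw [hp]
    exact ((hcond z.1 z.2.1).mp z.2.2) f hf
  · intro d
    by_cases h : z.1 d <;> simp [h]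
  · apply (hcond _ ?_).mpr
    · intro f hf
      have hp : (fun d => (((if z.1 d then 1 else 0 : ℕ)) : ℚ)) = HadAux.ptOf z.1 := by
        funext d
        by_cases h : z.1 d <;> simp [HadAux.ptOf, h]
      rw [hp]
      exact z.2 f hf
    · intro d
      by_cases h : z.1 d <;> simp [h]
  · rintro ⟨x, hx01, hH⟩
    apply Subtype.ext
    funext d
    rcases hx01 d with h | h <;> simp [h]
  · rintro ⟨b, hb⟩
    apply Subtype.ext
    funext d
    by_cases h : b d <;> simp [h]
end
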